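/- For odd n ≥ 7, let g = [3,2,5,4,7,6,…,n−3,n,n−1,1] ∈ Σ_n and let r_{1,n} be the full reversal. Then the breakpoint distance d_BP(r_{1,n}·g, g) equals n+1, and consequently λ₁(Σ_n, R_n) ≥ (n+1)/2, where R_n is the set of all reversals. -/
import Mathlib


open scoped Classical

/-- The function `p ↦ a + b − p` on positions `a,…,b` (0-indexed), identity elsewhere. -/
def revFun {n : ℕ} (a b : ℕ) (p : Fin n) : Fin n :=
  if h : a ≤ (p : ℕ) ∧ (p : ℕ) ≤ b ∧ b < n then ⟨a + b - (p : ℕ), by omega⟩ else p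

lemma revFun_involutive {n : ℕ} (a b : ℕ) :
    Function.Involutive (revFun (n := n) a b) := by
  intro p
  unfold revFun
  split_ifs with h1 h2 <;>
    first
      | (apply Fin.ext; simp only []; omega)
      | rfl
      | (exfalso; simp only [] at *; omega)

/-- The reversal `r_{a,b}` of the segment of positions `a,…,b` (0-indexed), as a
permutation of `Fin n`. -/
def rev {n : ℕ} (a b : ℕ) : Equiv.Perm (Fin n) :=
  Function.Involutive.toPerm _ (revFun_involutive a b)

/-- The one-line notation of `h` extended by sentinels: `[0, h(1), …, h(n), n+1]`
(as a function of the position `i ∈ {0,…,n+1}`, with values shifted to be 1-indexed). -/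
def extSeq {n : ℕ} (h : Equiv.Perm (Fin n)) (i : ℕ) : ℕ :=
  if hi : 1 ≤ i ∧ i ≤ n then ((h ⟨i - 1, by omega⟩ : Fin n) : ℕ) + 1
  else if i = 0 then 0 else n + 1

/-- The breakpoint distance `d_BP(g,g')`: the number of adjacent pairs in the extended
list of `g` that are not adjacent (in either order) in the extended list of `g'`. -/
noncomputable def dBP {n : ℕ} (g g' : Equiv.Perm (Fin n)) : ℕ :=
  ((Finset.range (n + 1)).filter (fun i => ¬ ∃ j ≤ n,
      (extSeq g' j = extSeq g i ∧ extSeq g' (j + 1) = extSeq g (i + 1)) ∨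
      (extSeq g' j = extSeq g (i + 1) ∧ extSeq g' (j + 1) = extSeq g i))).card

/-- The set of all reversals in `Σ_n` (of segments with at least two elements). -/
def reversals (n : ℕ) : Set (Equiv.Perm (Fin n)) :=
  {σ | ∃ a b : ℕ, a < b ∧ b < n ∧ σ = rev a b}


-- my lemmas

lemma rev_apply {n : ℕ} (a b : ℕ) (p : Fin n) : rev a b p = revFun a b p := rfl

lemma rev_coe {n : ℕ} (a b : ℕ) (p : Fin n) :
    ((rev a b p : Fin n) : ℕ) = if a ≤ (p : ℕ) ∧ (p : ℕ) ≤ b ∧ b < n then a + b - (p : ℕ) else p := by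
  rw [rev_apply]; unfold revFun; split_ifs <;> simp_all

lemma extSeq_mul_rev {n : ℕ} (h : Equiv.Perm (Fin n)) (a b : ℕ) (hab : a < b) (hbn : b < n)
    (i : ℕ) :
    extSeq (h * rev a b) i = extSeq h (if a + 1 ≤ i ∧ i ≤ b + 1 then a + b + 2 - i else i) := by
  unfold extSeq
  by_cases h1 : 1 ≤ i ∧ i ≤ n
  · rw [dif_pos h1]
    by_cases h2 : a + 1 ≤ i ∧ i ≤ b + 1
    · rw [if_pos h2, dif_pos (by omega : 1 ≤ a + b + 2 - i ∧ a + b + 2 - i ≤ n)]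
      simp only [Equiv.Perm.mul_apply]
      have e1 : rev a b (⟨i - 1, by omega⟩ : Fin n) = (⟨a + b + 2 - i - 1, by omega⟩ : Fin n) := by
        rw [rev_apply]
        unfold revFun
        rw [dif_pos ⟨by simp; omega, by simp; omega, hbn⟩]
        exact Fin.ext (by simp; omega)
      rw [e1]
    · rw [if_neg h2, dif_pos h1]
      simp only [Equiv.Perm.mul_apply]
      have e1 : rev a b (⟨i - 1, by omega⟩ : Fin n) = (⟨i - 1, by omega⟩ : Fin n) := by
        rw [rev_apply]
        unfold revFun
        rw [dif_neg (by simp; omega)]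
      rw [e1]
  · have h2 : ¬ (a + 1 ≤ i ∧ i ≤ b + 1) := by omega
    simp only [if_neg h2, dif_neg h1]

lemma dBP_self {n : ℕ} (g : Equiv.Perm (Fin n)) : dBP g g = 0 := by
  unfold dBP
  rw [Finset.card_eq_zero, Finset.filter_eq_empty_iff]
  intro i hi
  rw [Finset.mem_range] at hi
  push_neg
  exact ⟨i, by omega, Or.inl ⟨rfl, rfl⟩⟩

lemma dBP_step {n : ℕ} (h g : Equiv.Perm (Fin n)) {r : Equiv.Perm (Fin n)}
    (hr : r ∈ reversals n) : dBP h g ≤ dBP (h * r) g + 2 := by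
  classical
  obtain ⟨a, b, hab, hbn, rfl⟩ := hr
  set Q : ℕ → ℕ → Prop := fun x y => ∃ j ≤ n,
      (extSeq g j = x ∧ extSeq g (j + 1) = y) ∨
      (extSeq g j = y ∧ extSeq g (j + 1) = x) with hQ
  have Qsymm : ∀ x y, Q x y → Q y x := by
    rintro x y ⟨j, hj, hc⟩
    exact ⟨j, hj, hc.symm⟩
  set E : ℕ → ℕ := extSeq h with hE
  set E' : ℕ → ℕ := extSeq (h * rev a b) with hE'
  have hEE' : ∀ i, E' i = E (if a + 1 ≤ i ∧ i ≤ b + 1 then a + b + 2 - i else i) :=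
    fun i => extSeq_mul_rev h a b hab hbn i
  set φ : ℕ → ℕ := fun i => if a + 1 ≤ i ∧ i ≤ b then a + b + 1 - i else i with hφ
  set B : Finset ℕ := (Finset.range (n + 1)).filter (fun i => ¬ Q (E i) (E (i + 1))) with hB
  set B' : Finset ℕ :=
    (Finset.range (n + 1)).filter (fun i => ¬ Q (E' i) (E' (i + 1))) with hB'
  have key : dBP h g = B.card := rfl
  have key' : dBP (h * rev a b) g = B'.card := rfl
  rw [key, key']
  have claim : ∀ i ≤ n, i ≠ a → i ≠ b + 1 →
      (E' (φ i) = E i ∧ E' (φ i + 1) = E (i + 1)) ∨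
      (E' (φ i) = E (i + 1) ∧ E' (φ i + 1) = E i) := by
    intro i hi hia hib
    by_cases hmid : a + 1 ≤ i ∧ i ≤ b
    · right
      have h1 : φ i = a + b + 1 - i := by rw [hφ]; simp only [if_pos hmid]
      constructor
      · rw [h1, hEE', if_pos (by omega)]
        congr 1
        omega
      · rw [h1, hEE' (a + b + 1 - i + 1), if_pos (by omega)]
        congr 1
        omega
    · left
      have h1 : φ i = i := by rw [hφ]; simp only [if_neg hmid]
      constructor
      · rw [h1, hEE', if_neg (by omega)]
      · rw [h1, hEE' (i + 1), if_neg (by omega)]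
  have hmap : ∀ i ∈ B \ ({a, b + 1} : Finset ℕ), φ i ∈ B' := by
    intro i hi
    rw [Finset.mem_sdiff, Finset.mem_insert, Finset.mem_singleton] at hi
    obtain ⟨hiB, hine⟩ := hi
    rw [hB, Finset.mem_filter, Finset.mem_range] at hiB
    obtain ⟨hilt, hiQ⟩ := hiB
    have hia : i ≠ a := fun hc => hine (Or.inl hc)
    have hib : i ≠ b + 1 := fun hc => hine (Or.inr hc)
    rw [hB', Finset.mem_filter, Finset.mem_range]
    have hφlt : φ i < n + 1 := by simp only [hφ]; split_ifs <;> omega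
    refine ⟨hφlt, ?_⟩
    intro hQ'
    rcases claim i (by omega) hia hib with ⟨e1, e2⟩ | ⟨e1, e2⟩
    · rw [e1, e2] at hQ'; exact hiQ hQ'
    · rw [e1, e2] at hQ'; exact hiQ (Qsymm _ _ hQ')
  have hinj : Set.InjOn φ ↑(B \ ({a, b + 1} : Finset ℕ)) := by
    intro i _ i' _ hφe
    simp only [hφ] at hφe
    split_ifs at hφe <;> omega
  calc B.card ≤ (B ∪ ({a, b + 1} : Finset ℕ)).card :=
        Finset.card_le_card Finset.subset_union_left
    _ = (B \ ({a, b + 1} : Finset ℕ)).card + ({a, b + 1} : Finset ℕ).card :=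
        (Finset.card_sdiff_add_card B _).symm
    _ ≤ B'.card + 2 := by
        have h1 : (B \ ({a, b + 1} : Finset ℕ)).card ≤ B'.card :=
          Finset.card_le_card_of_injOn φ hmap hinj
        have h2 : ({a, b + 1} : Finset ℕ).card ≤ 2 := by
          apply le_trans (Finset.card_insert_le _ _)
          simp
        omega

lemma dBP_list {n : ℕ} (g : Equiv.Perm (Fin n)) :
    ∀ (l : List (Equiv.Perm (Fin n))), (∀ x ∈ l, x ∈ reversals n) →
      ∀ h : Equiv.Perm (Fin n), dBP h g ≤ 2 * l.length + dBP (h * l.prod) g := by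
  intro l
  induction l with
  | nil => intro _ h; simp
  | cons r t ih =>
    intro hmem h
    have h1 : dBP h g ≤ dBP (h * r) g + 2 := dBP_step h g (hmem r (by simp))
    have h2 : dBP (h * r) g ≤ 2 * t.length + dBP (h * r * t.prod) g :=
      ih (fun x hx => hmem x (by simp [hx])) (h * r)
    have h3 : h * r * t.prod = h * (r :: t).prod := by
      rw [List.prod_cons, mul_assoc]
    rw [h3] at h2
    simp only [List.length_cons]
    omega

lemma rev_inv {n : ℕ} (a b : ℕ) : (rev (n := n) a b)⁻¹ = rev a b := rfl

lemma swap_coe {n : ℕ} {x y : ℕ} (hx : x < n) (hy : y < n) (p : Fin n) :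
    ((Equiv.swap (⟨x, hx⟩ : Fin n) ⟨y, hy⟩ p : Fin n) : ℕ) =
      if (p : ℕ) = x then y else if (p : ℕ) = y then x else p := by
  rw [Equiv.swap_apply_def]
  split_ifs <;> simp_all [Fin.ext_iff]

lemma swap_eq_rev {n : ℕ} {x y : ℕ} (hxy : x < y) (hx : x < n) (hy : y < n) (hle : y ≤ x + 2) :
    Equiv.swap (⟨x, hx⟩ : Fin n) ⟨y, hy⟩ = rev x y := by
  apply Equiv.ext
  intro p
  apply Fin.ext
  rw [swap_coe, rev_coe]
  split_ifs <;> omega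

lemma swap_eq_rev_mul {n : ℕ} {x y : ℕ} (h3 : x + 3 ≤ y) (hx : x < n) (hy : y < n) :
    Equiv.swap (⟨x, hx⟩ : Fin n) ⟨y, hy⟩ = rev x y * rev (x + 1) (y - 1) := by
  apply Equiv.ext
  intro p
  apply Fin.ext
  rw [Equiv.Perm.mul_apply, swap_coe, rev_coe, rev_coe]
  split_ifs <;> omega

lemma swap_mem_mclosure {n : ℕ} (a b : ℕ) (ha : a < n) (hb : b < n) (hab : a < b) :
    Equiv.swap (⟨a, ha⟩ : Fin n) ⟨b, hb⟩ ∈ Submonoid.closure (reversals n) := by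
  rcases le_or_gt b (a + 2) with hle | hgt
  · rw [swap_eq_rev hab ha hb hle]
    exact Submonoid.subset_closure ⟨_, _, hab, hb, rfl⟩
  · rw [swap_eq_rev_mul (by omega) ha hb]
    exact mul_mem (Submonoid.subset_closure ⟨_, _, hab, hb, rfl⟩)
      (Submonoid.subset_closure ⟨_, _, by omega, by omega, rfl⟩)

lemma mclosure_reversals {n : ℕ} : Submonoid.closure (reversals n) = ⊤ := by
  rw [eq_top_iff, ← Equiv.Perm.mclosure_isSwap]
  apply Submonoid.closure_le.mpr
  rintro σ ⟨⟨a, ha⟩, ⟨b, hb⟩, huv, rfl⟩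
  rcases lt_trichotomy a b with h | h | h
  · exact swap_mem_mclosure a b ha hb h
  · exact absurd (Fin.ext h) huv
  · rw [Equiv.swap_comm]
    exact swap_mem_mclosure b a hb ha h

lemma exists_reversal_list {n : ℕ} (x : Equiv.Perm (Fin n)) :
    ∃ l : List (Equiv.Perm (Fin n)), (∀ y ∈ l, y ∈ reversals n) ∧ l.prod = x := by
  have hx : x ∈ Submonoid.closure (reversals n) := by
    rw [mclosure_reversals]; trivial
  exact Submonoid.exists_list_of_mem_closure hx


/-- `dS S g g'` is the minimum `k` such that `g' = g * s₁ * ⋯ * s_k` with all `sᵢ ∈ S`. -/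
noncomputable def dS {G : Type*} [Group G] (S : Set G) (g g' : G) : ℕ :=
  sInf {k | ∃ l : List G, (∀ x ∈ l, x ∈ S) ∧ l.length = k ∧ g * l.prod = g'}

/-- `λ₁(G,S) = max_{g ∈ G, s ∈ S} d_S(sg, g)`. -/
noncomputable def lam1 {G : Type*} [Group G] (S : Set G) : ℕ :=
  sSup {m | ∃ g : G, ∃ s ∈ S, m = dS S (s * g) g}

set_option maxHeartbeats 2000000 in
/-- for odd `n ≥ 7` and `g = [3,2,5,4,7,6,…,n,n−1,1] ∈ Σ_n` (in one-line
notation; here 0-indexed), the breakpoint distance between `r_{1,n}·g` and `g` is `n+1`,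
and consequently `λ₁(Σ_n, R_n) ≥ (n+1)/2`. -/
theorem stmt_16 (n : ℕ) (hn : 7 ≤ n) (hodd : Odd n)
    (g : Equiv.Perm (Fin n))
    (hg : ∀ p : Fin n, (g p : ℕ) =
      if (p : ℕ) = n - 1 then 0
      else if (p : ℕ) % 2 = 0 then (p : ℕ) + 2 else (p : ℕ)) :
    dBP (rev 0 (n - 1) * g) g = n + 1 ∧ (n + 1) / 2 ≤ lam1 (reversals n) := by
  have hodd' : n % 2 = 1 := Nat.odd_iff.mp hodd
  -- closed form for extSeq g
  have hEg : ∀ i ≤ n + 1, extSeq g i =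
      if i = 0 then 0 else if i = n + 1 then n + 1 else if i = n then 1
      else if i % 2 = 1 then i + 2 else i := by
    intro i hi
    unfold extSeq
    by_cases h1 : 1 ≤ i ∧ i ≤ n
    · rw [dif_pos h1, hg ⟨i - 1, by omega⟩]
      simp only [Fin.val_mk]
      split_ifs <;> omega
    · rw [dif_neg h1]
      split_ifs <;> omega
  -- closed form for extSeq (rev 0 (n-1) * g)
  have hrev0 : ∀ v : Fin n, ((rev 0 (n - 1) v : Fin n) : ℕ) = n - 1 - (v : ℕ) := by
    intro v
    rw [rev_coe, if_pos ⟨Nat.zero_le _, by omega, by omega⟩]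
    omega
  have hEh : ∀ i ≤ n + 1, extSeq (rev 0 (n - 1) * g) i =
      if i = 0 then 0 else if i = n + 1 then n + 1 else if i = n then n
      else if i % 2 = 1 then n - 1 - i else n + 1 - i := by
    intro i hi
    unfold extSeq
    by_cases h1 : 1 ≤ i ∧ i ≤ n
    · rw [dif_pos h1, Equiv.Perm.mul_apply, hrev0, hg ⟨i - 1, by omega⟩]
      simp only [Fin.val_mk]
      split_ifs <;> omega
    · rw [dif_neg h1]
      split_ifs <;> omega
  -- Part 1: all n+1 adjacencies are breakpoints
  have hBP : dBP (rev 0 (n - 1) * g) g = n + 1 := by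
    unfold dBP
    rw [Finset.filter_true_of_mem, Finset.card_range]
    intro i hi
    rw [Finset.mem_range] at hi
    rintro ⟨j, hj, hc⟩
    rw [hEg j (by omega), hEg (j + 1) (by omega),
      hEh i (by omega), hEh (i + 1) (by omega)] at hc
    rcases hc with ⟨h1, h2⟩ | ⟨h1, h2⟩ <;>
      (split_ifs at h1 h2 <;> first | assumption | omega)
  refine ⟨hBP, ?_⟩
  -- Part 2
  set S : Set ℕ := {m | ∃ g : Equiv.Perm (Fin n), ∃ s ∈ reversals n, m = dS (reversals n) (s * g) g}
    with hS
  have hsrev : rev 0 (n - 1) ∈ reversals n := ⟨0, n - 1, by omega, by omega, rfl⟩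
  have hmem : dS (reversals n) (rev 0 (n - 1) * g) g ∈ S := ⟨g, rev 0 (n - 1), hsrev, rfl⟩
  have hbdd : BddAbove S := by
    have hsub : S ⊆ Set.range (fun p : Equiv.Perm (Fin n) × Equiv.Perm (Fin n) =>
        dS (reversals n) (p.2 * p.1) p.1) := by
      rintro m ⟨g', s, _, rfl⟩
      exact ⟨(g', s), rfl⟩
    exact ((Set.finite_range _).subset hsub).bddAbove
  have hlow : (n + 1) / 2 ≤ dS (reversals n) (rev 0 (n - 1) * g) g := by
    unfold dS
    apply le_csInf
    · obtain ⟨l, hl, hlp⟩ := exists_reversal_list ((rev 0 (n - 1) * g)⁻¹ * g)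
      exact ⟨l.length, l, hl, rfl, by rw [hlp]; group⟩
    · rintro k ⟨l, hl, hlen, hprod⟩
      have h1 := dBP_list g l hl (rev 0 (n - 1) * g)
      rw [hprod, dBP_self] at h1
      omega
  exact le_trans hlow (le_csSup hbdd hmem)
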